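/- Let p(x) = x^n + a_{n−1}x^{n−1} + ⋯ + a_0 be a monic real polynomial of degree n and let q ∈ ℝ[x] with deg q < n. Then Bez_C(p,q) = q(C_p)·P_CH (Barnett's formula). -/

import Mathlib

open Polynomial Matrix BigOperators Finset

/-- The companion matrix of `p(x) = x^n + a_{n-1}x^{n-1} + ⋯ + a_0`: 1's on the first
subdiagonal, last column `(−a_0, …, −a_{n-1})ᵀ`, zeros elsewhere. -/
def companion (n : ℕ) (p : Polynomial ℝ) : Matrix (Fin n) (Fin n) ℝ :=
  Matrix.of fun i j =>
    if (j : ℕ) = n - 1 then -p.coeff (i : ℕ)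
    else if (i : ℕ) = (j : ℕ) + 1 then 1
    else 0

/-- The Bezoutian `Bez(p,q)(x,y) = (q(y)p(x) − q(x)p(y))/(x−y)`, as an element of
`ℝ[y][x]` (inner variable `y`, outer variable `x`); the division is exact, and is
performed via `divByMonic` by the monic (in `x`) polynomial `x − y`. -/
noncomputable def bezPoly (p q : Polynomial ℝ) : Polynomial (Polynomial ℝ) :=
  (Polynomial.C q * p.map (Polynomial.C : ℝ →+* Polynomial ℝ)
      - q.map (Polynomial.C : ℝ →+* Polynomial ℝ) * Polynomial.C p) /ₘ
    (Polynomial.X - Polynomial.C Polynomial.X)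

/-- `Bez_C(p,q)`: the `n×n` matrix whose `(i,j)`-entry is the coefficient of
`x^i·y^j` in `Bez(p,q)`. -/
noncomputable def bezMatrix (n : ℕ) (p q : Polynomial ℝ) : Matrix (Fin n) (Fin n) ℝ :=
  Matrix.of fun i j : Fin n => ((bezPoly p q).coeff (i : ℕ)).coeff (j : ℕ)

/-- `P_CH`: the Hankel matrix with `(i,j)`-entry `a_{i+j+1}` (with `a_n = 1`,
`a_k = 0` for `k > n`), i.e. the change of basis matrix from the canonical basis to
the Horner basis of `ℝ[x]/(p)`. -/
noncomputable def pCH (n : ℕ) (p : Polynomial ℝ) : Matrix (Fin n) (Fin n) ℝ :=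
  Matrix.of fun i j : Fin n => p.coeff ((i : ℕ) + (j : ℕ) + 1)

namespace BarnettAux


noncomputable def Hh (f : Polynomial ℝ) : Polynomial (Polynomial ℝ) :=
  ∑ m ∈ Finset.range (f.natDegree + 1),
    Polynomial.C (Polynomial.C (f.coeff m)) *
      ∑ i ∈ Finset.range m, Polynomial.X ^ i * Polynomial.C Polynomial.X ^ (m - 1 - i)

lemma Hh_mul (f : Polynomial ℝ) :
    Hh f * (Polynomial.X - Polynomial.C Polynomial.X)
      = f.map (Polynomial.C : ℝ →+* Polynomial ℝ) - Polynomial.C f := by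
  have hf := f.as_sum_range_C_mul_X_pow
  conv_rhs => rw [hf]
  rw [Hh, Finset.sum_mul]
  rw [Polynomial.map_sum, map_sum (Polynomial.C : Polynomial ℝ →+* Polynomial (Polynomial ℝ))]
  rw [← Finset.sum_sub_distrib]
  refine Finset.sum_congr rfl fun m _ => ?_
  simp only [Polynomial.map_mul, Polynomial.map_C, Polynomial.map_pow, Polynomial.map_X,
    _root_.map_mul, _root_.map_pow]
  rw [mul_assoc, geom_sum₂_mul Polynomial.X (Polynomial.C Polynomial.X : Polynomial (Polynomial ℝ)) m]
  ring

lemma Hh_coeff (f : Polynomial ℝ) (i j : ℕ) :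
    ((Hh f).coeff i).coeff j = f.coeff (i + j + 1) := by
  rw [Hh, Polynomial.finset_sum_coeff, Polynomial.finset_sum_coeff]
  have h1 : ∀ m ∈ Finset.range (f.natDegree + 1),
      (((Polynomial.C (Polynomial.C (f.coeff m)) *
        ∑ i' ∈ Finset.range m, Polynomial.X ^ i' * Polynomial.C Polynomial.X ^ (m - 1 - i') :
          Polynomial (Polynomial ℝ)).coeff i).coeff j)
      = if m = i + j + 1 then f.coeff m else 0 := by
    intro m _
    rw [Polynomial.coeff_C_mul, Polynomial.coeff_C_mul]
    have h2 : ((∑ i' ∈ Finset.range m, Polynomial.X ^ i' *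
          Polynomial.C Polynomial.X ^ (m - 1 - i') : Polynomial (Polynomial ℝ)).coeff i)
        = if i < m then Polynomial.X ^ (m - 1 - i) else 0 := by
      rw [Polynomial.finset_sum_coeff]
      have h3 : ∀ i' ∈ Finset.range m,
          (Polynomial.X ^ i' * Polynomial.C Polynomial.X ^ (m - 1 - i') :
            Polynomial (Polynomial ℝ)).coeff i
          = if i' = i then Polynomial.X ^ (m - 1 - i') else 0 := by
        intro i' _
        rw [← _root_.map_pow, mul_comm, Polynomial.coeff_C_mul, Polynomial.coeff_X_pow]
        by_cases h : i = i' <;> simp [h, eq_comm]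
      rw [Finset.sum_congr rfl h3, Finset.sum_ite_eq' (Finset.range m) i]
      simp [Finset.mem_range]
    rw [h2]
    by_cases him : i < m
    · simp only [if_pos him, Polynomial.coeff_X_pow]
      by_cases hm : m = i + j + 1
      · have hji : j = m - 1 - i := by omega
        simp [hm, ← hji]
      · have : ¬ (j = m - 1 - i) := by omega
        simp [this, hm]
    · have : ¬ (m = i + j + 1) := by omega
      simp [him, this]
  rw [Finset.sum_congr rfl h1, Finset.sum_ite_eq' (Finset.range (f.natDegree + 1)) (i + j + 1)]
  by_cases h : i + j + 1 ∈ Finset.range (f.natDegree + 1)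
  · simp [h]
  · rw [if_neg h]
    rw [Finset.mem_range] at h
    exact (Polynomial.coeff_eq_zero_of_natDegree_lt (by omega)).symm


lemma bez_eq (p q : Polynomial ℝ) :
    bezPoly p q = q.map (Polynomial.C : ℝ →+* Polynomial ℝ) * Hh p
      - p.map (Polynomial.C : ℝ →+* Polynomial ℝ) * Hh q := by
  have h1 := Hh_mul p
  have h2 := Hh_mul q
  have key : Polynomial.C q * p.map (Polynomial.C : ℝ →+* Polynomial ℝ)
      - q.map (Polynomial.C : ℝ →+* Polynomial ℝ) * Polynomial.C p
      = (Polynomial.X - Polynomial.C Polynomial.X) *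
        (q.map (Polynomial.C : ℝ →+* Polynomial ℝ) * Hh p
          - p.map (Polynomial.C : ℝ →+* Polynomial ℝ) * Hh q) := by
    linear_combination (p.map (Polynomial.C : ℝ →+* Polynomial ℝ)) * h2
      - (q.map (Polynomial.C : ℝ →+* Polynomial ℝ)) * h1
  rw [bezPoly, key, Polynomial.mul_divByMonic_cancel_left _ (Polynomial.monic_X_sub_C _)]

lemma bez_coeff_zero (n : ℕ) (hn : 1 ≤ n) (p q : Polynomial ℝ)
    (hpdeg : p.natDegree = n) (hqn : q.natDegree ≤ n) (i : ℕ) (hi : n ≤ i) :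
    (bezPoly p q).coeff i = 0 := by
  apply Polynomial.coeff_eq_zero_of_natDegree_lt
  have hb : (bezPoly p q).natDegree ≤ n - 1 := by
    rw [bezPoly, Polynomial.natDegree_divByMonic _ (Polynomial.monic_X_sub_C _),
      Polynomial.natDegree_X_sub_C]
    have hnum : (Polynomial.C q * p.map (Polynomial.C : ℝ →+* Polynomial ℝ)
        - q.map (Polynomial.C : ℝ →+* Polynomial ℝ) * Polynomial.C p).natDegree ≤ n := by
      apply le_trans (Polynomial.natDegree_sub_le _ _)
      apply max_le
      · apply le_trans (Polynomial.natDegree_mul_le)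
        simp only [Polynomial.natDegree_C, zero_add]
        exact le_trans Polynomial.natDegree_map_le hpdeg.le
      · apply le_trans (Polynomial.natDegree_mul_le)
        simp only [Polynomial.natDegree_C, add_zero]
        exact le_trans Polynomial.natDegree_map_le hqn
    omega
  omega

noncomputable def col (n : ℕ) (f : Polynomial ℝ) (j : ℕ) : Polynomial ℝ :=
  ∑ k ∈ Finset.range n, Polynomial.C (f.coeff (k + j + 1)) * Polynomial.X ^ k

lemma col_coeff (n : ℕ) (f : Polynomial ℝ) (hf : f.natDegree ≤ n) (j k : ℕ) :
    (col n f j).coeff k = f.coeff (k + j + 1) := by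
  rw [col, Polynomial.finset_sum_coeff]
  have h3 : ∀ k' ∈ Finset.range n,
      (Polynomial.C (f.coeff (k' + j + 1)) * Polynomial.X ^ k').coeff k
      = if k' = k then f.coeff (k' + j + 1) else 0 := by
    intro k' _
    rw [Polynomial.coeff_C_mul, Polynomial.coeff_X_pow]
    by_cases h : k = k' <;> simp [h, eq_comm]
  rw [Finset.sum_congr rfl h3, Finset.sum_ite_eq' (Finset.range n) k]
  by_cases h : k ∈ Finset.range n
  · simp [h]
  · rw [if_neg h]
    rw [Finset.mem_range] at h
    exact (Polynomial.coeff_eq_zero_of_natDegree_lt (by omega)).symm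

lemma col_degree_lt (n : ℕ) (hn : 1 ≤ n) (f : Polynomial ℝ) (j : ℕ) :
    (col n f j).degree < (n : WithBot ℕ) := by
  rw [Polynomial.degree_lt_iff_coeff_zero]
  intro m hm
  rw [col, Polynomial.finset_sum_coeff]
  apply Finset.sum_eq_zero
  intro k hk
  rw [Finset.mem_range] at hk
  rw [Polynomial.coeff_C_mul, Polynomial.coeff_X_pow, if_neg (by omega), mul_zero]

lemma prod_coeff (n : ℕ) (f g : Polynomial ℝ) (hg : g.natDegree ≤ n) (i j : ℕ) :
    ((f.map (Polynomial.C : ℝ →+* Polynomial ℝ) * Hh g).coeff i).coeff j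
      = (f * col n g j).coeff i := by
  rw [Polynomial.coeff_mul, Polynomial.coeff_mul, Polynomial.finset_sum_coeff]
  refine Finset.sum_congr rfl fun ab _ => ?_
  rw [Polynomial.coeff_map, Polynomial.coeff_C_mul, Hh_coeff, col_coeff n g hg]

lemma bez_entry (n : ℕ) (p q : Polynomial ℝ)
    (hpn : p.natDegree ≤ n) (hqn : q.natDegree ≤ n) (i j : ℕ) :
    ((bezPoly p q).coeff i).coeff j = (q * col n p j - p * col n q j).coeff i := by
  rw [bez_eq, Polynomial.coeff_sub, Polynomial.coeff_sub, Polynomial.coeff_sub,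
    prod_coeff n q p hpn, prod_coeff n p q hqn]




variable {n : ℕ} {p : Polynomial ℝ}

noncomputable def mu (n : ℕ) (p f : Polynomial ℝ) : Fin n → ℝ :=
  fun i => (f %ₘ p).coeff (i : ℕ)

lemma mu_add (f g : Polynomial ℝ) : mu n p (f + g) = mu n p f + mu n p g := by
  funext i
  simp [mu, Polynomial.add_modByMonic]

lemma mu_smul (hp : p.Monic) (a : ℝ) (f : Polynomial ℝ) :
    mu n p (a • f) = a • mu n p f := by
  have hs : (a • f) %ₘ p = a • (f %ₘ p) := by
    refine (Polynomial.div_modByMonic_unique (a • (f /ₘ p)) _ hp ⟨?_, ?_⟩).2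
    · have h := Polynomial.modByMonic_add_div f p
      rw [mul_smul_comm, ← smul_add, h]
    · exact lt_of_le_of_lt (Polynomial.degree_smul_le _ _)
        (Polynomial.degree_modByMonic_lt _ hp)
  funext i
  simp [mu, hs]

lemma mu_X_mul (hn : 1 ≤ n) (hp : p.Monic) (hpdeg : p.natDegree = n) (f : Polynomial ℝ) :
    mu n p (Polynomial.X * f) = (companion n p).mulVec (mu n p f) := by
  obtain ⟨m, rfl⟩ : ∃ m, n = m + 1 := ⟨n - 1, by omega⟩
  set r := f %ₘ p with hr
  have hdegr : r.degree < p.degree := Polynomial.degree_modByMonic_lt _ hp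
  have hdegp : p.degree = ((m + 1 : ℕ) : WithBot ℕ) := by
    rw [Polynomial.degree_eq_natDegree hp.ne_zero, hpdeg]
  set c := r.coeff m with hc
  have hpm : p.coeff (m + 1) = 1 := by
    have := hp.coeff_natDegree
    rwa [hpdeg] at this
  have hrc : ∀ k, m + 1 ≤ k → r.coeff k = 0 := by
    intro k hk
    apply Polynomial.coeff_eq_zero_of_degree_lt
    exact lt_of_lt_of_le (hdegr.trans_le hdegp.le) (by exact_mod_cast Nat.cast_le.2 hk)
  have hmod : (Polynomial.X * f) %ₘ p = Polynomial.X * r - Polynomial.C c * p := by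
    refine (Polynomial.div_modByMonic_unique (Polynomial.X * (f /ₘ p) + Polynomial.C c) _ hp
      ⟨?_, ?_⟩).2
    · have h := Polynomial.modByMonic_add_div f p
      linear_combination Polynomial.X * h
    · rw [hdegp, Polynomial.degree_lt_iff_coeff_zero]
      intro k hk
      have hk1 : 1 ≤ k := by omega
      obtain ⟨k', rfl⟩ : ∃ k', k = k' + 1 := ⟨k - 1, by omega⟩
      rw [Polynomial.coeff_sub, Polynomial.coeff_X_mul, Polynomial.coeff_C_mul]
      rcases eq_or_lt_of_le hk with h | h
      · have : k' = m := by omega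
        subst this
        rw [hpm, mul_one, ← hc, sub_self]
      · rw [hrc k' (by omega), Polynomial.coeff_eq_zero_of_natDegree_lt (by omega), mul_zero,
          sub_zero]
  funext i
  show ((Polynomial.X * f) %ₘ p).coeff i = _
  rw [hmod, Polynomial.coeff_sub, Polynomial.coeff_C_mul]
  rw [Matrix.mulVec, dotProduct]
  rw [Fin.sum_univ_castSucc]
  have hlast : companion (m + 1) p i (Fin.last m) * mu (m + 1) p f (Fin.last m)
      = -(p.coeff i * c) := by
    simp only [companion, Matrix.of_apply, Fin.val_last]
    rw [if_pos (by omega)]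
    simp only [mu, ← hr, Fin.val_last]
    rw [hc, hr]
    ring
  rw [hlast]
  have hcast : ∀ j : Fin m, companion (m + 1) p i (Fin.castSucc j) * mu (m + 1) p f (Fin.castSucc j)
      = if (i : ℕ) = (j : ℕ) + 1 then r.coeff j else 0 := by
    intro j
    simp only [companion, Matrix.of_apply, Fin.coe_castSucc]
    rw [if_neg (by omega : ¬ ((j : ℕ) = m + 1 - 1))]
    simp only [mu, ← hr, Fin.coe_castSucc]
    by_cases h : (i : ℕ) = (j : ℕ) + 1 <;> simp [h]
  rw [Finset.sum_congr rfl fun j _ => hcast j]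
  rcases Nat.eq_zero_or_pos (i : ℕ) with h0 | h0
  · rw [Finset.sum_eq_zero (fun j _ => by rw [if_neg (by omega)])]
    have : (Polynomial.X * r).coeff (i : ℕ) = 0 := by
      rw [h0, Polynomial.mul_coeff_zero, Polynomial.coeff_X_zero, zero_mul]
    rw [this]
    ring
  · obtain ⟨k, hk⟩ : ∃ k, (i : ℕ) = k + 1 := ⟨(i : ℕ) - 1, by omega⟩
    have hkm : k < m := by have := i.isLt; omega
    have hsum : ∑ j : Fin m, (if (i : ℕ) = (j : ℕ) + 1 then r.coeff (j : ℕ) else 0)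
        = r.coeff k := by
      have heq : ∀ j : Fin m, (if (i : ℕ) = (j : ℕ) + 1 then r.coeff (j : ℕ) else 0)
          = if j = ⟨k, hkm⟩ then r.coeff (j : ℕ) else 0 := by
        intro j
        by_cases h : j = ⟨k, hkm⟩
        · subst h
          rw [if_pos rfl, if_pos (by simp [hk])]
        · rw [if_neg h, if_neg]
          intro hcon
          apply h
          rw [Fin.ext_iff]
          show (j : ℕ) = k
          omega
      rw [Finset.sum_congr rfl fun j _ => heq j, Finset.sum_ite_eq' Finset.univ (⟨k, hkm⟩ : Fin m)]
      simp
    rw [hsum, hk, Polynomial.coeff_X_mul]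
    ring

lemma mu_mul (hn : 1 ≤ n) (hp : p.Monic) (hpdeg : p.natDegree = n) (g f : Polynomial ℝ) :
    mu n p (g * f) = (Polynomial.aeval (companion n p) g).mulVec (mu n p f) := by
  induction g using Polynomial.induction_on generalizing f with
  | C a =>
    rw [← Polynomial.smul_eq_C_mul, mu_smul hp, Polynomial.aeval_C]
    funext i
    simp [Matrix.mulVec, dotProduct, Matrix.algebraMap_matrix_apply, Finset.mul_sum,
      apply_ite, Finset.sum_ite_eq]
  | add g1 g2 h1 h2 =>
    rw [add_mul, mu_add, h1, h2, map_add, Matrix.add_mulVec]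
  | monomial k a ih =>
    have h1 : Polynomial.C a * Polynomial.X ^ (k + 1) * f
        = (Polynomial.C a * Polynomial.X ^ k) * (Polynomial.X * f) := by ring
    rw [h1, ih (Polynomial.X * f), mu_X_mul hn hp hpdeg, Matrix.mulVec_mulVec]
    congr 1
    rw [show Polynomial.C a * Polynomial.X ^ (k + 1)
      = (Polynomial.C a * Polynomial.X ^ k) * Polynomial.X by ring,
      _root_.map_mul (Polynomial.aeval (companion n p)) (Polynomial.C a * Polynomial.X ^ k)
        Polynomial.X,
      Polynomial.aeval_X]


end BarnettAux

/-- Barnett's formula: for `p` monic of degree `n` and `deg q < n`,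
`Bez_C(p,q) = q(C_p)·P_CH`. -/
theorem stmt_11 (n : ℕ) (hn : 1 ≤ n) (p q : Polynomial ℝ)
    (hp : p.Monic) (hpdeg : p.natDegree = n) (hq : q.degree < n) :
    bezMatrix n p q = Polynomial.aeval (companion n p) q * pCH n p := by
  have hqn : q.natDegree ≤ n := Polynomial.natDegree_le_iff_degree_le.mpr hq.le
  have hdegp : p.degree = (n : WithBot ℕ) := by
    rw [Polynomial.degree_eq_natDegree hp.ne_zero, hpdeg]
  funext i j
  have hcol : BarnettAux.mu n p (BarnettAux.col n p (j : ℕ))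
      = fun k : Fin n => pCH n p k j := by
    funext k
    show ((BarnettAux.col n p (j : ℕ)) %ₘ p).coeff (k : ℕ) = _
    rw [(Polynomial.modByMonic_eq_self_iff hp).mpr
      (by rw [hdegp]; exact BarnettAux.col_degree_lt n hn p (j : ℕ))]
    exact BarnettAux.col_coeff n p hpdeg.le (j : ℕ) (k : ℕ)
  have hdeglt : (q * BarnettAux.col n p (j : ℕ)
      - p * BarnettAux.col n q (j : ℕ)).degree < p.degree := by
    rw [hdegp, Polynomial.degree_lt_iff_coeff_zero]
    intro m hm
    rw [← BarnettAux.bez_entry n p q hpdeg.le hqn m (j : ℕ),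
      BarnettAux.bez_coeff_zero n hn p q hpdeg hqn m hm]
    simp
  have hmod : (q * BarnettAux.col n p (j : ℕ)) %ₘ p
      = q * BarnettAux.col n p (j : ℕ) - p * BarnettAux.col n q (j : ℕ) :=
    (Polynomial.div_modByMonic_unique (BarnettAux.col n q (j : ℕ)) _ hp
      ⟨by ring, hdeglt⟩).2
  have hmu := BarnettAux.mu_mul hn hp hpdeg q (BarnettAux.col n p (j : ℕ))
  rw [hcol] at hmu
  have hL : bezMatrix n p q i j
      = ((q * BarnettAux.col n p (j : ℕ)) %ₘ p).coeff (i : ℕ) := by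
    rw [hmod]
    exact BarnettAux.bez_entry n p q hpdeg.le hqn (i : ℕ) (j : ℕ)
  rw [hL]
  have hR := congrFun hmu i
  rw [show ((q * BarnettAux.col n p (j : ℕ)) %ₘ p).coeff (i : ℕ)
    = BarnettAux.mu n p (q * BarnettAux.col n p (j : ℕ)) i from rfl, hR]
  simp [Matrix.mulVec, Matrix.mul_apply, dotProduct, pCH]
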